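/- Let g, h : Δ* → Σ* be non-erasing morphisms. Then the coincidence set I(g,h) = {(u,v) ∈ Δ* × Δ* : g(u) = h(v)} is, as a submonoid of Δ* × Δ*, freely generated by its set i(g,h) of minimal elements: every element of I(g,h) other than (ε,ε) has a unique factorization as a product of elements of i(g,h). Moreover, i(g,h) is a bifix code: for any two distinct elements (u,v), (u',v') of i(g,h), it is not the case that u is a prefix of u' and v is a prefix of v', and it is not the case that u is a suffix of u' and v is a suffix of v'. -/

import Mathlib

/-- The two-letter alphabet `A = {a, b}`. -/
inductive Ltr : Type
  | a : Ltr
  | b : Ltr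
  deriving DecidableEq

/-- Apply a morphism (given by the images of the letters) to a word. -/
def mapp {α σ : Type*} (g : α → List σ) (w : List α) : List σ :=
  (w.map g).flatten

/-- The `n`-th power `tⁿ` of a word `t`. -/
def npow {σ : Type*} (t : List σ) (n : ℕ) : List σ :=
  (List.replicate n t).flatten

/-- A binary morphism is periodic if all images of letters are powers of a common word. -/
def Periodic {σ : Type*} (g : Ltr → List σ) : Prop :=
  ∃ t : List σ, ∀ x : Ltr, ∃ n : ℕ, g x = npow t n

/-- The equality set `E(g,h)`. -/
def EqSet {σ : Type*} (g h : Ltr → List σ) : Set (List Ltr) :=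
  {u | mapp g u = mapp h u}

/-- `u` is a minimal element of `E(g,h)`: nonempty, in `E(g,h)`, and not a product of two
nonempty elements of `E(g,h)`. -/
def MinEl {σ : Type*} (g h : Ltr → List σ) (u : List Ltr) : Prop :=
  u ≠ [] ∧ u ∈ EqSet g h ∧
    ∀ v w : List Ltr, v ≠ [] → w ≠ [] → v ∈ EqSet g h → w ∈ EqSet g h → u ≠ v ++ w

/-- The submonoid of the free monoid generated by a set `S` of words. -/
def gen {α : Type*} (S : Set (List α)) : Set (List α) :=
  {u | ∃ l : List (List α), (∀ v ∈ l, v ∈ S) ∧ u = l.flatten}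

/-- A binary morphism is marked if the images of the two letters are nonempty and
begin with different letters. -/
def Marked {σ : Type*} (g : Ltr → List σ) : Prop :=
  g Ltr.a ≠ [] ∧ g Ltr.b ≠ [] ∧ (g Ltr.a).head? ≠ (g Ltr.b).head?

open Classical in
/-- Longest common prefix of two words. -/
noncomputable def lcp {σ : Type*} : List σ → List σ → List σ
  | x :: xs, y :: ys => if x = y then x :: lcp xs ys else []
  | _, _ => []

/-- `z_h`: the longest common prefix of `h(ab)` and `h(ba)`. -/
noncomputable def zh {σ : Type*} (h : Ltr → List σ) : List σ :=
  lcp (h Ltr.a ++ h Ltr.b) (h Ltr.b ++ h Ltr.a)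

/-- `z̄_h`: the longest common suffix of `h(ab)` and `h(ba)`. -/
noncomputable def zbar {σ : Type*} (h : Ltr → List σ) : List σ :=
  (lcp (h Ltr.a ++ h Ltr.b).reverse ((h Ltr.b ++ h Ltr.a).reverse)).reverse

/-- Componentwise concatenation in `Δ* × Δ*`. -/
def pprod {α : Type*} (p q : List α × List α) : List α × List α :=
  (p.1 ++ q.1, p.2 ++ q.2)

/-- The coincidence set `I(g,h) = {(u,v) | g(u) = h(v)}`. -/
def CoinSet {α σ : Type*} (g h : α → List σ) : Set (List α × List α) :=
  {p | mapp g p.1 = mapp h p.2}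

/-- Minimal elements of the coincidence set: elements other than `(ε,ε)` that are not
a product of two elements of `I(g,h) \ {(ε,ε)}`. -/
def MinCoin {α σ : Type*} (g h : α → List σ) (p : List α × List α) : Prop :=
  p ≠ ([], []) ∧ p ∈ CoinSet g h ∧
    ¬ ∃ q r : List α × List α, q ≠ ([], []) ∧ r ≠ ([], []) ∧
      q ∈ CoinSet g h ∧ r ∈ CoinSet g h ∧ p = pprod q r

/-- `(e,f)` is a block of `(g,h)`: nonempty words with `z_h·g(e) = h(f)·z_h`, minimal
with this property. -/
def MinBlock {σ : Type*} (g h : Ltr → List σ) (e f : List Ltr) : Prop :=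
  e ≠ [] ∧ f ≠ [] ∧ zh h ++ mapp g e = mapp h f ++ zh h ∧
    ∀ u v : List Ltr, u <+: e → v <+: f →
      zh h ++ mapp g u = mapp h v ++ zh h → (u = [] ∧ v = []) ∨ (u = e ∧ v = f)

/-- `e` is a nonempty word with `z_h·g(e) = h(e)·z_h`, minimal with this property. -/
def MinEqBlock {σ : Type*} (g h : Ltr → List σ) (e : List Ltr) : Prop :=
  e ≠ [] ∧ zh h ++ mapp g e = mapp h e ++ zh h ∧
    ∀ e₁ : List Ltr, e₁ <+: e → zh h ++ mapp g e₁ = mapp h e₁ ++ zh h →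
      e₁ = [] ∨ e₁ = e

/-- The binary morphism sending `a ↦ x` and `b ↦ y`. -/
def two {σ : Type*} (x y : List σ) : Ltr → List σ
  | Ltr.a => x
  | Ltr.b => y

/-- A counterexample: the minimal generating set of `E(g,h)` has at least two elements,
`g` is marked, `h` is not marked, `|g(a)| > |h(a)|` and `|g(b)| < |h(b)|`. -/
def Counterexample {σ : Type*} (g h : Ltr → List σ) : Prop :=
  (∃ α β : List Ltr, MinEl g h α ∧ MinEl g h β ∧ α ≠ β) ∧
  Marked g ∧ ¬ Marked h ∧
  (h Ltr.a).length < (g Ltr.a).length ∧ (g Ltr.b).length < (h Ltr.b).length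

section Aux
variable {Δ σ : Type*} {g h : Δ → List σ}

lemma mapp_append (g : Δ → List σ) (u v : List Δ) :
    mapp g (u ++ v) = mapp g u ++ mapp g v := by simp [mapp]

lemma mapp_eq_nil (hg : ∀ x, g x ≠ []) {u : List Δ} (hu : mapp g u = []) : u = [] := by
  cases u with
  | nil => rfl
  | cons a t =>
    simp only [mapp, List.map_cons, List.flatten_cons, List.append_eq_nil_iff] at hu
    exact absurd hu.1 (hg a)

lemma mapp_prefix (g : Δ → List σ) {u v : List Δ} (huv : u <+: v) :
    mapp g u <+: mapp g v := by
  obtain ⟨s, rfl⟩ := huv; rw [mapp_append]; exact List.prefix_append _ _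

lemma mapp_cancel (hg : ∀ x, g x ≠ []) {u v : List Δ} (huv : u <+: v)
    (h2 : mapp g v <+: mapp g u) : u = v := by
  obtain ⟨s, rfl⟩ := huv
  rw [mapp_append] at h2
  have hl := h2.length_le
  simp only [List.length_append] at hl
  have : mapp g s = [] := List.eq_nil_of_length_eq_zero (by omega)
  have : s = [] := mapp_eq_nil hg this
  simp [this]

lemma mincoin_fst_ne (hg : ∀ x, g x ≠ []) (hh : ∀ x, h x ≠ [])
    {p : List Δ × List Δ} (hne : p ≠ ([], [])) (hI : p ∈ CoinSet g h) : p.1 ≠ [] := by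
  intro h1
  have : mapp h p.2 = [] := by
    rw [← hI, h1]; rfl
  have h2 := mapp_eq_nil hh this
  exact hne (Prod.ext h1 h2)

lemma min_prefix_eq (hg : ∀ x, g x ≠ []) (hh : ∀ x, h x ≠ [])
    {p q : List Δ × List Δ} (hp : MinCoin g h p) (hq : MinCoin g h q)
    (h1 : p.1 <+: q.1) (h2 : p.2 <+: q.2) : p = q := by
  obtain ⟨r1, hr1⟩ := h1
  obtain ⟨r2, hr2⟩ := h2
  have hpI := hp.2.1
  have hqI := hq.2.1
  simp only [CoinSet, Set.mem_setOf_eq] at hpI hqI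
  rw [← hr1, ← hr2, mapp_append, mapp_append, hpI] at hqI
  have hr : mapp g r1 = mapp h r2 := List.append_cancel_left hqI
  by_cases hc : (r1, r2) = (([] : List Δ), ([] : List Δ))
  · have e1 : r1 = [] := congrArg Prod.fst hc
    have e2 : r2 = [] := congrArg Prod.snd hc
    subst e1; subst e2
    simp only [List.append_nil] at hr1 hr2
    exact Prod.ext hr1 hr2
  · exact absurd ⟨p, (r1, r2), hp.1, hc, hp.2.1, hr,
      (Prod.ext hr1.symm hr2.symm)⟩ hq.2.2

lemma min_suffix_eq (hg : ∀ x, g x ≠ []) (hh : ∀ x, h x ≠ [])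
    {p q : List Δ × List Δ} (hp : MinCoin g h p) (hq : MinCoin g h q)
    (h1 : p.1 <:+ q.1) (h2 : p.2 <:+ q.2) : p = q := by
  obtain ⟨r1, hr1⟩ := h1
  obtain ⟨r2, hr2⟩ := h2
  have hpI := hp.2.1
  have hqI := hq.2.1
  simp only [CoinSet, Set.mem_setOf_eq] at hpI hqI
  rw [← hr1, ← hr2, mapp_append, mapp_append, hpI] at hqI
  have hr : mapp g r1 = mapp h r2 := List.append_cancel_right hqI
  by_cases hc : (r1, r2) = (([] : List Δ), ([] : List Δ))
  · have e1 : r1 = [] := congrArg Prod.fst hc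
    have e2 : r2 = [] := congrArg Prod.snd hc
    subst e1; subst e2
    simp only [List.nil_append] at hr1 hr2
    exact Prod.ext hr1 hr2
  · exact absurd ⟨(r1, r2), p, hc, hp.1, hr, hp.2.1,
      (Prod.ext hr1.symm hr2.symm)⟩ hq.2.2

lemma head_unique (hg : ∀ x, g x ≠ []) (hh : ∀ x, h x ≠ [])
    {p q q' : List Δ × List Δ}
    (hq : MinCoin g h q) (hq' : MinCoin g h q')
    (h1 : q.1 <+: p.1) (h2 : q.2 <+: p.2)
    (h1' : q'.1 <+: p.1) (h2' : q'.2 <+: p.2) : q = q' := by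
  -- wlog via symmetry: handle both cases
  have key : ∀ a b : List Δ × List Δ, MinCoin g h a → MinCoin g h b →
      a.1 <+: p.1 → a.2 <+: p.2 → b.1 <+: p.1 → b.2 <+: p.2 →
      a.1 <+: b.1 → a = b := by
    intro a b ha hb _ ha2 _ hb2 hab
    have hab2 : a.2 <+: b.2 := by
      rcases List.prefix_or_prefix_of_prefix ha2 hb2 with hc | hc
      · exact hc
      · have : mapp h a.2 <+: mapp h b.2 := by
          rw [← ha.2.1, ← hb.2.1]; exact mapp_prefix g hab
        have := mapp_cancel hh hc this
        rw [this]
    exact min_prefix_eq hg hh ha hb hab hab2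
  rcases List.prefix_or_prefix_of_prefix h1 h1' with hc | hc
  · exact key q q' hq hq' h1 h2 h1' h2' hc
  · exact (key q' q hq' hq h1' h2' h1 h2 hc).symm

lemma coin_take_drop {p : List Δ × List Δ} (hI : p ∈ CoinSet g h) {k m : ℕ}
    (he : mapp g (p.1.take k) = mapp h (p.2.take m)) :
    mapp g (p.1.drop k) = mapp h (p.2.drop m) := by
  have h1 : mapp g p.1 = mapp g (p.1.take k) ++ mapp g (p.1.drop k) := by
    rw [← mapp_append, List.take_append_drop]
  have h2 : mapp h p.2 = mapp h (p.2.take m) ++ mapp h (p.2.drop m) := by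
    rw [← mapp_append, List.take_append_drop]
  have := hI
  simp only [CoinSet, Set.mem_setOf_eq] at this
  rw [h1, h2, he] at this
  exact List.append_cancel_left this

lemma exists_fact (hg : ∀ x, g x ≠ []) (hh : ∀ x, h x ≠ []) :
    ∀ n (p : List Δ × List Δ), p.1.length ≤ n → p ∈ CoinSet g h → p ≠ ([], []) →
    ∃ l : List (List Δ × List Δ),
      (∀ q ∈ l, MinCoin g h q) ∧ p = l.foldr pprod ([], []) := by
  intro n
  induction n with
  | zero =>
    intro p hlen hI hne
    have h1 : p.1 = [] := List.eq_nil_of_length_eq_zero (Nat.le_zero.mp hlen)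
    exact absurd h1 (mincoin_fst_ne hg hh hne hI)
  | succ n ih =>
    intro p hlen hI hne
    classical
    have hp1 : p.1 ≠ [] := mincoin_fst_ne hg hh hne hI
    have hp1len : 0 < p.1.length := List.length_pos_iff.mpr hp1
    have hex : ∃ k, 0 < k ∧ ∃ m, mapp g (p.1.take k) = mapp h (p.2.take m) := by
      refine ⟨p.1.length, hp1len, p.2.length, ?_⟩
      simp only [List.take_length]
      exact hI
    set P : ℕ → Prop := fun k => 0 < k ∧ ∃ m, mapp g (p.1.take k) = mapp h (p.2.take m)
      with hP
    obtain ⟨hk0pos, m₀, hEq⟩ := Nat.find_spec hex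
    set k₀ := Nat.find hex with hk₀
    -- we may assume m₀ minimal in the sense take m₀ meaningful; not needed
    set q : List Δ × List Δ := (p.1.take k₀, p.2.take m₀) with hqdef
    set r : List Δ × List Δ := (p.1.drop k₀, p.2.drop m₀) with hrdef
    have hqI : q ∈ CoinSet g h := hEq
    have hrI : r ∈ CoinSet g h := coin_take_drop hI hEq
    have hq1 : q.1 ≠ [] := by
      have : 0 < q.1.length := by
        simp only [hqdef, List.length_take]
        exact lt_min hk0pos hp1len
      exact List.ne_nil_of_length_pos this
    have hqne : q ≠ ([], []) := by
      intro hc; exact hq1 (congrArg Prod.fst hc)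
    have hqmin : MinCoin g h q := by
      refine ⟨hqne, hqI, ?_⟩
      rintro ⟨q₁, q₂, hq₁ne, hq₂ne, hq₁I, hq₂I, hqsplit⟩
      have hq₁1 : q₁.1 ≠ [] := mincoin_fst_ne hg hh hq₁ne hq₁I
      have hq₂1 : q₂.1 ≠ [] := mincoin_fst_ne hg hh hq₂ne hq₂I
      have hsplit1 : q.1 = q₁.1 ++ q₂.1 := congrArg Prod.fst hqsplit
      have hsplit2 : q.2 = q₁.2 ++ q₂.2 := congrArg Prod.snd hqsplit
      -- q₁.1 is a proper prefix of q.1 which is a prefix of p.1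
      have hpre1 : q₁.1 <+: p.1 :=
        List.IsPrefix.trans ⟨q₂.1, hsplit1.symm⟩ (List.take_prefix _ _)
      have hpre2 : q₁.2 <+: p.2 :=
        List.IsPrefix.trans ⟨q₂.2, hsplit2.symm⟩ (List.take_prefix _ _)
      have htake1 : p.1.take q₁.1.length = q₁.1 := (List.prefix_iff_eq_take.mp hpre1).symm
      have htake2 : p.2.take q₁.2.length = q₁.2 := (List.prefix_iff_eq_take.mp hpre2).symm
      have hklt : q₁.1.length < k₀ := by
        have h1 : q.1.length = q₁.1.length + q₂.1.length := by
          rw [hsplit1, List.length_append]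
        have h2 : q.1.length ≤ k₀ := by
          simp only [hqdef, List.length_take]; omega
        have h3 : 0 < q₂.1.length := List.length_pos_iff.mpr hq₂1
        omega
      have : P q₁.1.length := by
        refine ⟨List.length_pos_iff.mpr hq₁1, q₁.2.length, ?_⟩
        rw [htake1, htake2]
        exact hq₁I
      exact Nat.find_min hex hklt this
    have hpsplit : p = pprod q r := by
      simp only [hqdef, hrdef, pprod, List.take_append_drop]
    by_cases hrc : r = ([], [])
    · refine ⟨[q], ?_, ?_⟩
      · intro x hx; simp only [List.mem_singleton] at hx; rw [hx]; exact hqmin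
      · simp only [List.foldr_cons, List.foldr_nil]
        rw [hpsplit, hrc]
    · have hrlen : r.1.length ≤ n := by
        simp only [hrdef, List.length_drop]
        omega
      obtain ⟨l', hl'min, hl'fold⟩ := ih r hrlen hrI hrc
      refine ⟨q :: l', ?_, ?_⟩
      · intro x hx
        rcases List.mem_cons.mp hx with hx | hx
        · rw [hx]; exact hqmin
        · exact hl'min x hx
      · simp only [List.foldr_cons]
        rw [hpsplit, hl'fold]

lemma foldr_coin (hg : ∀ x, g x ≠ []) (hh : ∀ x, h x ≠ []) :
    ∀ l : List (List Δ × List Δ), (∀ q ∈ l, MinCoin g h q) →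
      l.foldr pprod ([], []) ∈ CoinSet g h := by
  intro l
  induction l with
  | nil => intro _; simp [CoinSet, mapp]
  | cons q t ih =>
    intro hl
    have hq := (hl q (List.mem_cons_self)).2.1
    have ht := ih (fun x hx => hl x (List.mem_cons_of_mem _ hx))
    simp only [List.foldr_cons, CoinSet, Set.mem_setOf_eq, pprod, mapp_append]
    simp only [CoinSet, Set.mem_setOf_eq] at hq ht
    rw [hq, ht]

lemma fact_unique (hg : ∀ x, g x ≠ []) (hh : ∀ x, h x ≠ []) :
    ∀ l₁ l₂ : List (List Δ × List Δ),
    (∀ q ∈ l₁, MinCoin g h q) → (∀ q ∈ l₂, MinCoin g h q) →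
    l₁.foldr pprod ([], []) = l₂.foldr pprod ([], []) → l₁ = l₂ := by
  have hne : ∀ q (t : List (List Δ × List Δ)), MinCoin g h q →
      (q :: t).foldr pprod ([], []) ≠ ([], []) := by
    intro q t hq hc
    have h1 : q.1 ++ (t.foldr pprod ([], [])).1 = [] := congrArg Prod.fst hc
    have h2 : q.2 ++ (t.foldr pprod ([], [])).2 = [] := congrArg Prod.snd hc
    rw [List.append_eq_nil_iff] at h1 h2
    exact hq.1 (Prod.ext h1.1 h2.1)
  intro l₁
  induction l₁ with
  | nil =>
    intro l₂ _ h2 he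
    cases l₂ with
    | nil => rfl
    | cons q t =>
      exact absurd he.symm (hne q t (h2 q (List.mem_cons_self)))
  | cons q t ih =>
    intro l₂ h1 h2 he
    cases l₂ with
    | nil =>
      exact absurd he (hne q t (h1 q (List.mem_cons_self)))
    | cons q' t' =>
      have hq := h1 q (List.mem_cons_self)
      have hq' := h2 q' (List.mem_cons_self)
      have hp1 : q.1 <+: ((q :: t).foldr pprod ([], [])).1 :=
        ⟨(t.foldr pprod ([], [])).1, rfl⟩
      have hp2 : q.2 <+: ((q :: t).foldr pprod ([], [])).2 :=
        ⟨(t.foldr pprod ([], [])).2, rfl⟩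
      have hp1' : q'.1 <+: ((q :: t).foldr pprod ([], [])).1 := by
        rw [he]; exact ⟨(t'.foldr pprod ([], [])).1, rfl⟩
      have hp2' : q'.2 <+: ((q :: t).foldr pprod ([], [])).2 := by
        rw [he]; exact ⟨(t'.foldr pprod ([], [])).2, rfl⟩
      have hqq : q = q' := head_unique hg hh hq hq' hp1 hp2 hp1' hp2'
      subst hqq
      simp only [List.foldr_cons, pprod, Prod.mk.injEq] at he
      have e1 : (t.foldr pprod ([], [])).1 = (t'.foldr pprod ([], [])).1 :=
        List.append_cancel_left he.1
      have e2 : (t.foldr pprod ([], [])).2 = (t'.foldr pprod ([], [])).2 :=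
        List.append_cancel_left he.2
      have : t.foldr pprod (([] : List Δ), ([] : List Δ)) = t'.foldr pprod ([], []) :=
        Prod.ext e1 e2
      rw [ih t' (fun x hx => h1 x (List.mem_cons_of_mem _ hx))
        (fun x hx => h2 x (List.mem_cons_of_mem _ hx)) this]

end Aux

/-- For non-erasing morphisms `g, h : Δ* → Σ*`, the coincidence set
`I(g,h)` is freely generated by its set of minimal elements, and the minimal elements
form a bifix code. -/
theorem stmt_6 {Δ σ : Type*} (g h : Δ → List σ)
    (hg : ∀ x : Δ, g x ≠ []) (hh : ∀ x : Δ, h x ≠ []) :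
    (∀ p ∈ CoinSet g h, p ≠ ([], []) →
      ∃! l : List (List Δ × List Δ),
        (∀ q ∈ l, MinCoin g h q) ∧ p = l.foldr pprod ([], [])) ∧
    (∀ p q : List Δ × List Δ, MinCoin g h p → MinCoin g h q → p ≠ q →
      ¬ (p.1 <+: q.1 ∧ p.2 <+: q.2) ∧ ¬ (p.1 <:+ q.1 ∧ p.2 <:+ q.2)) := by
  constructor
  · intro p hp hne
    obtain ⟨l, hlmin, hlfold⟩ := exists_fact hg hh p.1.length p le_rfl hp hne
    refine ⟨l, ⟨hlmin, hlfold⟩, ?_⟩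
    rintro l' ⟨hl'min, hl'fold⟩
    exact fact_unique hg hh l' l hl'min hlmin (hl'fold.symm.trans hlfold)
  · intro p q hp hq hne
    constructor
    · rintro ⟨h1, h2⟩
      exact hne (min_prefix_eq hg hh hp hq h1 h2)
    · rintro ⟨h1, h2⟩
      exact hne (min_suffix_eq hg hh hp hq h1 h2)
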